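/- Let R be an abelian ring that is not reversible. Then the trivial extension T(R,R) is i-reversible if and only if R has only trivial idempotents. -/

import Mathlib

open TrivSqZeroExt

private lemma snd_mul'' {R : Type*} [Ring R] (x y : TrivSqZeroExt R R) :
    (x * y).snd = x.fst * y.snd + x.snd * y.fst := by
  rw [TrivSqZeroExt.snd_mul]
  simp [smul_eq_mul, MulOpposite.smul_eq_mul_unop]

/-- A ring is *i-reversible* if whenever `a * b` is a non-zero idempotent, `b * a` is an
idempotent. -/
def IsIReversible (S : Type*) [Ring S] : Prop :=
  ∀ a b : S, IsIdempotentElem (a * b) → a * b ≠ 0 → IsIdempotentElem (b * a)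

/-- A ring is *reversible* if `a * b = 0` implies `b * a = 0`. -/
def IsReversible (S : Type*) [Ring S] : Prop :=
  ∀ a b : S, a * b = 0 → b * a = 0

/-- A ring has only trivial idempotents if its only idempotents are `0` and `1`. -/
def HasOnlyTrivialIdempotents (S : Type*) [Ring S] : Prop :=
  ∀ e : S, IsIdempotentElem e → e = 0 ∨ e = 1

/-- For an abelian ring `R` that is not reversible, the trivial extension `T(R,R)` is
i-reversible if and only if `R` has only trivial idempotents. -/
theorem trivSqZeroExt_isIReversible_iff (R : Type*) [Ring R]
    (habelian : ∀ e : R, IsIdempotentElem e → ∀ r : R, e * r = r * e)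
    (hnotrev : ¬ IsReversible R) :
    IsIReversible (TrivSqZeroExt R R) ↔ HasOnlyTrivialIdempotents R := by
  have h10 : (1 : R) ≠ 0 := by
    intro h
    apply hnotrev
    intro a b _
    calc b * a = b * a * 1 := (mul_one _).symm
    _ = b * a * 0 := by rw [h]
    _ = 0 := mul_zero _
  obtain ⟨x, y, hxy, hyx⟩ : ∃ x y : R, x * y = 0 ∧ y * x ≠ 0 := by
    by_contra h
    push_neg at h
    exact hnotrev h
  constructor
  · -- i-reversible → only trivial idempotents
    intro hT e he
    by_contra hcon
    push_neg at hcon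
    obtain ⟨he0, he1⟩ := hcon
    -- R is i-reversible via the inl embedding
    have hR : ∀ a b : R, IsIdempotentElem (a * b) → a * b ≠ 0 → IsIdempotentElem (b * a) := by
      intro a b hab hne
      have h1 : IsIdempotentElem ((inl a : TrivSqZeroExt R R) * inl b) := by
        rw [inl_mul_inl]
        show _ * _ = _
        rw [inl_mul_inl, hab]
      have h2 : (inl a : TrivSqZeroExt R R) * inl b ≠ 0 := by
        rw [inl_mul_inl]
        intro h
        apply hne
        simpa using congrArg TrivSqZeroExt.fst h
      have h3 : _ * _ = _ := hT (inl a) (inl b) h1 h2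
      rw [inl_mul_inl, inl_mul_inl] at h3
      exact inl_injective h3
    have key : ∀ f : R, IsIdempotentElem f → f ≠ 0 → y * x * (1 - f) = 0 := by
      intro f hf hf0
      have hcomm : ∀ r : R, f * r = r * f := habelian f hf
      have hcomm1 : ∀ r : R, (1 - f) * r = r * (1 - f) := fun r => by
        rw [sub_mul, mul_sub, one_mul, mul_one, hcomm]
      have h3 : f * (1 - f) = 0 := by rw [mul_sub, mul_one, hf, sub_self]
      have h4 : (1 - f) * f = 0 := by rw [sub_mul, one_mul, hf, sub_self]
      have h11 : (1 - f) * (1 - f) = 1 - f := by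
        rw [mul_sub, mul_one, h4, sub_zero]
      set p : R := f + (1 - f) * x with hp
      set q : R := f + y * (1 - f) with hq
      have hpq : p * q = f := by
        rw [hp, hq]
        have e1 : f * (y * (1 - f)) = 0 := by
          rw [← mul_assoc, hcomm y, mul_assoc, h3, mul_zero]
        have e2 : (1 - f) * x * f = 0 := by
          rw [mul_assoc, ← hcomm x, ← mul_assoc, h4, zero_mul]
        have e5 : (1 - f) * x * (y * (1 - f)) = 0 := by
          rw [mul_assoc, ← mul_assoc x, hxy, zero_mul, mul_zero]
        have hex : (f + (1 - f) * x) * (f + y * (1 - f))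
            = f * f + f * (y * (1 - f)) + ((1 - f) * x * f + (1 - f) * x * (y * (1 - f))) := by
          noncomm_ring
        rw [hex, hf, e1, e2, e5, add_zero, add_zero, add_zero]
      have hqp : q * p = f + y * x * (1 - f) := by
        rw [hp, hq]
        have e1 : f * ((1 - f) * x) = 0 := by rw [← mul_assoc, h3, zero_mul]
        have e2 : y * (1 - f) * f = 0 := by rw [mul_assoc, h4, mul_zero]
        have e5 : y * (1 - f) * ((1 - f) * x) = y * x * (1 - f) := by
          rw [mul_assoc, ← mul_assoc (1-f), h11, hcomm1 x, ← mul_assoc]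
        have hex : (f + y * (1 - f)) * (f + (1 - f) * x)
            = f * f + f * ((1 - f) * x) + (y * (1 - f) * f + y * (1 - f) * ((1 - f) * x)) := by
          noncomm_ring
        rw [hex, hf, e1, e2, e5, add_zero, zero_add]
      have hidem : IsIdempotentElem (p * q) := by rw [hpq]; exact hf
      have hne : p * q ≠ 0 := by rw [hpq]; exact hf0
      have hthis : _ * _ = _ := hR p q hidem hne
      rw [hqp] at hthis
      set c : R := y * x * (1 - f) with hc
      have hcf : c * f = 0 := by rw [hc, mul_assoc, h4, mul_zero]
      have hfc2 : f * c = 0 := by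
        rw [hc, ← mul_assoc, hcomm (y*x), mul_assoc, h3, mul_zero]
      have hcc : c * c = 0 := by
        calc c * c = y * (x * ((1 - f) * (y * (x * (1 - f))))) := by
              rw [hc]; simp only [mul_assoc]
          _ = y * (x * ((y * (x * (1 - f))) * (1 - f))) := by rw [hcomm1]
          _ = y * ((x * y) * (x * (1 - f) * (1 - f))) := by simp only [mul_assoc]
          _ = 0 := by rw [hxy, zero_mul, mul_zero]
      have hexp : (f + c) * (f + c) = f * f + (f * c + (c * f + c * c)) := by noncomm_ring
      rw [hexp, hf, hfc2, hcf, hcc, add_zero, add_zero, add_zero] at hthis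
      -- hthis : f = f + c
      have hc0 : c = 0 := by
        have := hthis.symm
        rwa [add_eq_left] at this
      exact hc0
    have k1 : y * x * (1 - e) = 0 := key e he he0
    have hie : IsIdempotentElem (1 - e) := by
      show (1 - e) * (1 - e) = 1 - e
      rw [mul_sub, mul_one, sub_mul, one_mul, he]
      abel
    have hie0 : (1 : R) - e ≠ 0 := fun h => he1 (sub_eq_zero.mp h).symm
    have k2 : y * x * (1 - (1 - e)) = 0 := key (1 - e) hie hie0
    rw [sub_sub_cancel] at k2
    apply hyx
    calc y * x = y * x * ((1 - e) + e) := by rw [sub_add_cancel, mul_one]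
      _ = y * x * (1 - e) + y * x * e := by rw [mul_add]
      _ = 0 := by rw [k1, k2, add_zero]
  · -- only trivial idempotents → T(R,R) is i-reversible
    intro htriv a b hab hne
    have hab' : (a * b) * (a * b) = a * b := hab
    have hfst : IsIdempotentElem (a.fst * b.fst) := by
      have := congrArg TrivSqZeroExt.fst hab'
      exact (by simpa using this : a.fst * b.fst * (a.fst * b.fst) = a.fst * b.fst)
    rcases htriv _ hfst with h0 | h1
    · exfalso
      apply hne
      have hf0 : (a * b).fst = 0 := by rw [TrivSqZeroExt.fst_mul]; exact h0
      refine TrivSqZeroExt.ext ?_ ?_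
      · simpa using hf0
      · have h := congrArg TrivSqZeroExt.snd hab'
        rw [snd_mul'' (a*b) (a*b), hf0, zero_mul, mul_zero, add_zero] at h
        simpa using h.symm
    · -- a.fst * b.fst = 1
      have hba1 : b.fst * a.fst = 1 := by
        have hid : IsIdempotentElem (b.fst * a.fst) := by
          show (b.fst * a.fst) * (b.fst * a.fst) = b.fst * a.fst
          rw [mul_assoc, ← mul_assoc a.fst, h1, one_mul]
        rcases htriv _ hid with h0' | h1'
        · exfalso
          apply h10
          calc (1 : R) = (a.fst * b.fst) * (a.fst * b.fst) := by rw [h1, mul_one]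
            _ = a.fst * ((b.fst * a.fst) * b.fst) := by rw [mul_assoc, ← mul_assoc b.fst]
            _ = 0 := by rw [h0', zero_mul, mul_zero]
        · exact h1'
      have hsnd : a.fst * b.snd + a.snd * b.fst = 0 := by
        have h := congrArg TrivSqZeroExt.snd hab'
        rw [snd_mul'' (a*b) (a*b), TrivSqZeroExt.fst_mul, h1, one_mul, mul_one] at h
        have hm : (a * b).snd = 0 := by rwa [add_eq_left] at h
        rwa [snd_mul''] at hm
      have hn : b.fst * a.snd + b.snd * a.fst = 0 := by
        have h2 : b.fst * (a.fst * b.snd + a.snd * b.fst) * a.fst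
            = b.snd * a.fst + b.fst * a.snd := by
          rw [mul_add, add_mul, ← mul_assoc b.fst a.fst, hba1, one_mul,
            mul_assoc b.fst, mul_assoc a.snd, hba1, mul_one]
        rw [← add_comm (b.snd * a.fst), ← h2, hsnd, mul_zero, zero_mul]
      have hm0 : (b * a).snd = 0 := by rw [snd_mul'', hn]
      refine TrivSqZeroExt.ext ?_ ?_
      · show ((b*a) * (b*a)).fst = (b*a).fst
        rw [TrivSqZeroExt.fst_mul, TrivSqZeroExt.fst_mul, hba1, one_mul]
      · show ((b*a) * (b*a)).snd = (b*a).snd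
        rw [snd_mul'' (b*a) (b*a), hm0, mul_zero, zero_mul, add_zero]
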